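/- arXiv:1510.00290 — 2 statements merged into one kernel-verified Lean document; each statement's English description precedes it below -/
import Mathlib

section
/- Let $c_1 \in (0,1)$, $\lambda > 0$, and let $\delta_{kj} = c_1(k+\lambda) + d_0$ for some constant $d_0 \ge 0$ (so $\delta_{ij} - \delta_{kj} = (i-k)c_1$), with all $\delta_{kj} < 1$. Define coefficients by $b_{i,j,n+1} = \prod_{m=1}^n (1-\delta_{ij}/m)^{-1}$ and, for $k = i-1, i-2, \dots, 0$, $b_{k,j,n+1} = \prod_{m=1}^n(1-\delta_{kj}/m)^{-1} - \sum_{m=1}^n b_{k+1,j,m+1}\frac{c_1(k+\lambda)}{m}\prod_{d=m}^n(1-\delta_{kj}/d)^{-1}$. Then for each $0\le k \le i-1$, $\lim_{n\to\infty} \frac{b_{k,j,n+1}}{b_{i,j,n+1}} = (-1)^{i-k}\prod_{d=k}^{i-1}\frac{\lambda+d}{i-d}$. -/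
open Filter Finset Asymptotics

private theorem my_wprod : ∀ (s : Finset ℕ) (f : ℕ → ℝ), (∀ m ∈ s, 0 ≤ f m) →
    1 + ∑ m ∈ s, f m ≤ ∏ m ∈ s, (1 + f m) := by
  intro s
  induction s using Finset.cons_induction with
  | empty => intro f _; simp
  | cons a s ha ih =>
    intro f hf
    rw [Finset.prod_cons, Finset.sum_cons]
    have h1 := ih f (fun m hm => hf m (Finset.mem_cons.2 (Or.inr hm)))
    have ha' : 0 ≤ f a := hf a (Finset.mem_cons_self a s)
    have hs : 0 ≤ ∑ m ∈ s, f m :=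
      Finset.sum_nonneg fun m hm => hf m (Finset.mem_cons.2 (Or.inr hm))
    nlinarith [mul_le_mul_of_nonneg_left h1 (by linarith : (0:ℝ) ≤ 1 + f a)]

private theorem my_stolz (S Q : ℕ → ℝ) (L : ℝ)
    (hd : ∀ n, 0 ≤ Q (n + 1) - Q n)
    (hQ : Tendsto Q atTop atTop)
    (ho : (fun n => S (n + 1) - S n - L * (Q (n + 1) - Q n)) =o[atTop]
      fun n => Q (n + 1) - Q n) :
    Tendsto (fun n => S n / Q n) atTop (nhds L) := by
  have hgsum : ∀ n, ∑ m ∈ range n, (Q (m + 1) - Q m) = Q n - Q 0 :=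
    fun n => Finset.sum_range_sub Q n
  have hg' : Tendsto (fun n => ∑ m ∈ range n, (Q (m + 1) - Q m)) atTop atTop := by
    simp_rw [hgsum, sub_eq_add_neg]
    exact tendsto_atTop_add_const_right _ (-Q 0) hQ
  have h1 := ho.sum_range hd hg'
  have hfsum : ∀ n, ∑ m ∈ range n, (S (m + 1) - S m - L * (Q (m + 1) - Q m))
      = S n - S 0 - L * (Q n - Q 0) := by
    intro n
    rw [Finset.sum_sub_distrib, ← Finset.mul_sum, Finset.sum_range_sub S n, hgsum]
  have h2 : (fun n => Q n - Q 0) =O[atTop] Q := by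
    apply IsBigO.of_bound 2
    filter_upwards [hQ.eventually_ge_atTop |Q 0|] with n hn
    have h0 : 0 ≤ Q n := le_trans (abs_nonneg _) hn
    rw [Real.norm_eq_abs, Real.norm_eq_abs, abs_of_nonneg h0]
    have := abs_sub (Q n) (Q 0)
    have h2' : |Q n| = Q n := abs_of_nonneg h0
    linarith
  have h3 : (fun n => S n - S 0 - L * (Q n - Q 0)) =o[atTop] Q := by
    have h1' : (fun n => S n - S 0 - L * (Q n - Q 0)) =o[atTop] fun n => Q n - Q 0 :=
      h1.congr hfsum hgsum
    exact h1'.trans_isBigO h2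
  have h4 : Tendsto (fun n => (S n - S 0 - L * (Q n - Q 0)) / Q n) atTop (nhds 0) :=
    h3.tendsto_div_nhds_zero
  have hinv : Tendsto (fun n => (Q n)⁻¹) atTop (nhds 0) := hQ.inv_tendsto_atTop
  have hcomb : Tendsto
      (fun n => (S n - S 0 - L * (Q n - Q 0)) / Q n + ((S 0 - L * Q 0) * (Q n)⁻¹ + L))
      atTop (nhds (0 + ((S 0 - L * Q 0) * 0 + L))) :=
    h4.add ((hinv.const_mul _).add tendsto_const_nhds)
  have hev : ∀ᶠ n in atTop, (S n - S 0 - L * (Q n - Q 0)) / Q n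
      + ((S 0 - L * Q 0) * (Q n)⁻¹ + L) = S n / Q n := by
    filter_upwards [hQ.eventually_gt_atTop 0] with n hn
    field_simp
    ring
  have := hcomb.congr' hev
  simpa using this

/-- Asymptotic ratio of the martingale coefficients: with
`δ_k = c₁(k+λ) + d₀ < 1`, `b_{i,n+1} = ∏_{m=1}^n (1-δ_i/m)⁻¹` and the backward
recursion for `b_{k,n+1}`, one has
`b_{k,n+1}/b_{i,n+1} → (-1)^{i-k} ∏_{d=k}^{i-1} (λ+d)/(i-d)`. -/
theorem stmt5 (c1 lam d0 : ℝ) (hc1 : 0 < c1) (hc1' : c1 < 1) (hlam : 0 < lam)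
    (hd0 : 0 ≤ d0) (i : ℕ)
    (δ : ℕ → ℝ) (hδ : ∀ k : ℕ, δ k = c1 * ((k : ℝ) + lam) + d0)
    (hδlt : ∀ k ≤ i, δ k < 1)
    (b : ℕ → ℕ → ℝ)
    (htop : ∀ n : ℕ, b i (n + 1) = ∏ m ∈ Finset.Icc 1 n, (1 - δ i / (m : ℝ))⁻¹)
    (hrec : ∀ k < i, ∀ n : ℕ,
      b k (n + 1) = (∏ m ∈ Finset.Icc 1 n, (1 - δ k / (m : ℝ))⁻¹)
        - ∑ m ∈ Finset.Icc 1 n, b (k + 1) (m + 1) * (c1 * ((k : ℝ) + lam) / m) *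
            ∏ d ∈ Finset.Icc m n, (1 - δ k / (d : ℝ))⁻¹) :
    ∀ k < i, Tendsto (fun n : ℕ => b k (n + 1) / b i (n + 1)) atTop
      (nhds ((-1 : ℝ) ^ (i - k) * ∏ d ∈ Finset.Ico k i, (lam + d) / ((i : ℝ) - d))) := by
  have hδpos : ∀ k : ℕ, 0 < δ k := by
    intro k; rw [hδ]; positivity
  set P : ℕ → ℕ → ℝ := fun k n => ∏ m ∈ Finset.Icc 1 n, (1 - δ k / (m : ℝ))⁻¹ with hPdef
  have hfac : ∀ k, k ≤ i → ∀ m : ℕ, 1 ≤ m → 0 < 1 - δ k / (m : ℝ) := by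
    intro k hk m hm
    have h1 : (1:ℝ) ≤ (m:ℝ) := by exact_mod_cast hm
    have h2 : δ k / (m:ℝ) ≤ δ k := by
      rw [div_le_iff₀ (by linarith)]
      nlinarith [hδpos k]
    linarith [hδlt k hk]
  have hPpos : ∀ k, k ≤ i → ∀ n, 0 < P k n := by
    intro k hk n
    apply Finset.prod_pos
    intro m hm
    exact inv_pos.2 (hfac k hk m (Finset.mem_Icc.1 hm).1)
  have hPstep : ∀ k n, P k (n + 1) = P k n * (1 - δ k / ((n:ℝ) + 1))⁻¹ := by
    intro k n
    have := Finset.prod_Icc_succ_top (by omega : 1 ≤ n + 1)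
      (fun m : ℕ => (1 - δ k / (m : ℝ))⁻¹)
    rw [hPdef]
    simpa using this
  have hsplit : ∀ k, ∀ m n : ℕ, 1 ≤ m → m ≤ n →
      P k (m - 1) * ∏ d ∈ Finset.Icc m n, (1 - δ k / (d : ℝ))⁻¹ = P k n := by
    intro k m n h1 h2
    have hm : m - 1 + 1 = m := Nat.succ_pred_eq_of_pos h1
    rw [hPdef]
    simp only
    rw [show Finset.Icc 1 (m - 1) = Finset.Ioc 0 (m - 1) from Finset.Icc_add_one_left_eq_Ioc 0 (m - 1),
        show Finset.Icc m n = Finset.Ioc (m - 1) n from by rw [← Finset.Icc_add_one_left_eq_Ioc, hm],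
        show Finset.Icc 1 n = Finset.Ioc 0 n from Finset.Icc_add_one_left_eq_Ioc 0 n]
    exact Finset.prod_Ioc_consecutive _ (Nat.zero_le _) (by omega)
  have key : ∀ j : ℕ, ∀ k : ℕ, k + j = i →
      Tendsto (fun n : ℕ => b k (n + 1) / b i (n + 1)) atTop
        (nhds ((-1 : ℝ) ^ (i - k) * ∏ d ∈ Finset.Ico k i, (lam + d) / ((i : ℝ) - d))) := by
    intro j
    induction j with
    | zero =>
      intro k hk
      have hk' : k = i := by omega
      subst hk'
      have : ∀ n : ℕ, b k (n + 1) / b k (n + 1) = 1 := by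
        intro n
        rw [div_self]
        rw [htop n]
        exact (hPpos k le_rfl n).ne'
      simp only [this]
      simp [Nat.sub_self]
    | succ j ih =>
      intro k hki
      have hk : k < i := by omega
      have hk1 : k + 1 + j = i := by omega
      have IH := ih (k + 1) hk1
      have hkle : k ≤ i := le_of_lt hk
      have hik : (0:ℝ) < (i:ℝ) - (k:ℝ) := by
        have : (k:ℝ) < (i:ℝ) := by exact_mod_cast hk
        linarith
      have hdd : δ i - δ k = c1 * ((i:ℝ) - (k:ℝ)) := by
        rw [hδ, hδ]; ring
      have hddpos : 0 < δ i - δ k := by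
        rw [hdd]; positivity
      set S : ℕ → ℝ := fun n => ∑ m ∈ Finset.Icc 1 n,
        b (k + 1) (m + 1) * (c1 * ((k:ℝ) + lam) / (m:ℝ)) / P k (m - 1) with hSdef
      set Q : ℕ → ℝ := fun n => P i n / P k n with hQdef
      have hQpos : ∀ n, 0 < Q n := fun n => div_pos (hPpos i le_rfl n) (hPpos k hkle n)
      -- (a) closed form for b k
      have hbk : ∀ n, b k (n + 1) = P k n * (1 - S n) := by
        intro n
        rw [hrec k hk n]
        have hsum : ∑ m ∈ Finset.Icc 1 n, b (k + 1) (m + 1) * (c1 * ((k:ℝ) + lam) / (m:ℝ)) *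
            ∏ d ∈ Finset.Icc m n, (1 - δ k / (d : ℝ))⁻¹
            = ∑ m ∈ Finset.Icc 1 n,
              P k n * (b (k + 1) (m + 1) * (c1 * ((k:ℝ) + lam) / (m:ℝ)) / P k (m - 1)) := by
          apply Finset.sum_congr rfl
          intro m hm
          obtain ⟨hm1, hm2⟩ := Finset.mem_Icc.1 hm
          have hne : P k (m - 1) ≠ 0 := (hPpos k hkle (m - 1)).ne'
          have hprod : ∏ d ∈ Finset.Icc m n, (1 - δ k / (d : ℝ))⁻¹ = P k n / P k (m - 1) := by
            rw [eq_div_iff hne, mul_comm]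
            exact hsplit k m n hm1 hm2
          rw [hprod]
          ring
        rw [hsum, ← Finset.mul_sum, hSdef]
        ring
      -- (b) step formula for Q
      have hfacn : ∀ n : ℕ, ∀ k', k' ≤ i → 0 < 1 - δ k' / ((n:ℝ) + 1) := by
        intro n k' hk'
        have := hfac k' hk' (n + 1) (by omega)
        push_cast at this
        exact this
      have hQstep : ∀ n : ℕ, Q (n + 1) - Q n = Q n * ((δ i - δ k) / (((n:ℝ) + 1) - δ i)) := by
        intro n
        have h1 : 1 - δ i / ((n:ℝ) + 1) ≠ 0 := (hfacn n i le_rfl).ne'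
        have h2 : 1 - δ k / ((n:ℝ) + 1) ≠ 0 := (hfacn n k hkle).ne'
        have h3 : P k n ≠ 0 := (hPpos k hkle n).ne'
        have h3' : P i n ≠ 0 := (hPpos i le_rfl n).ne'
        have hu : ((n:ℝ) + 1) ≠ 0 := by positivity
        have h4 : ((n:ℝ) + 1) - δ i ≠ 0 := by
          have := hδlt i le_rfl
          have : (0:ℝ) ≤ (n:ℝ) := Nat.cast_nonneg n
          nlinarith [hδlt i le_rfl]
        rw [hQdef]
        simp only
        rw [hPstep, hPstep]
        field_simp
        ring
      have hdpos : ∀ n : ℕ, 0 < Q (n + 1) - Q n := by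
        intro n
        rw [hQstep n]
        apply mul_pos (hQpos n)
        apply div_pos hddpos
        have h5 := hδlt i le_rfl
        have h6 : (0:ℝ) ≤ (n:ℝ) := Nat.cast_nonneg n
        linarith
      -- (d) Q tends to infinity
      have hQQ : ∀ n, Q n = ∏ m ∈ Finset.Icc 1 n,
          ((1 - δ k / (m:ℝ)) / (1 - δ i / (m:ℝ))) := by
        intro n
        rw [hQdef]
        simp only [hPdef]
        rw [← Finset.prod_div_distrib]
        apply Finset.prod_congr rfl
        intro m hm
        rw [inv_div_inv]
      have hlow : ∀ n : ℕ, 1 + ∑ m ∈ Finset.Icc 1 n, (δ i - δ k) / (m:ℝ) ≤ Q n := by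
        intro n
        rw [hQQ n]
        have step1 : 1 + ∑ m ∈ Finset.Icc 1 n, (δ i - δ k) / (m:ℝ)
            ≤ ∏ m ∈ Finset.Icc 1 n, (1 + (δ i - δ k) / (m:ℝ)) := by
          apply my_wprod
          intro m hm
          have : (0:ℝ) < (m:ℝ) := by
            have := (Finset.mem_Icc.1 hm).1
            exact_mod_cast Nat.lt_of_lt_of_le Nat.zero_lt_one this
          positivity
        refine le_trans step1 (Finset.prod_le_prod ?_ ?_)
        · intro m hm
          have : (0:ℝ) < (m:ℝ) := by
            have := (Finset.mem_Icc.1 hm).1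
            exact_mod_cast Nat.lt_of_lt_of_le Nat.zero_lt_one this
          positivity
        · intro m hm
          have hm1 := (Finset.mem_Icc.1 hm).1
          have hmR : (1:ℝ) ≤ (m:ℝ) := by exact_mod_cast hm1
          have hmpos : (0:ℝ) < (m:ℝ) := by linarith
          have hgi : 0 < 1 - δ i / (m:ℝ) := hfac i le_rfl m hm1
          rw [le_div_iff₀ hgi]
          have expand : (1 + (δ i - δ k) / (m:ℝ)) * (1 - δ i / (m:ℝ))
              = 1 - δ k / (m:ℝ) - (δ i - δ k) * δ i / ((m:ℝ) * (m:ℝ)) := by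
            field_simp
            ring
          rw [expand]
          have : 0 ≤ (δ i - δ k) * δ i / ((m:ℝ) * (m:ℝ)) := by
            have := hδpos i
            positivity
          linarith
      have hsumH : ∀ n : ℕ, ∑ m ∈ Finset.Icc 1 n, (δ i - δ k) / (m:ℝ)
          = (δ i - δ k) * ∑ r ∈ Finset.range n, (1 / ((r:ℝ) + 1)) := by
        intro n
        rw [Finset.mul_sum, show Finset.Icc 1 n = Finset.Ico 1 (n + 1) from by
          rw [Finset.Ico_add_one_right_eq_Icc], Finset.sum_Ico_eq_sum_range]
        simp only [Nat.add_sub_cancel]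
        apply Finset.sum_congr rfl
        intro r _
        push_cast
        rw [div_eq_mul_one_div, add_comm (1:ℝ)]
      have hQtop : Tendsto Q atTop atTop := by
        apply tendsto_atTop_mono (fun n => (hlow n))
        simp only [hsumH]
        apply tendsto_atTop_add_const_left
        exact (Real.tendsto_sum_range_one_div_nat_succ_atTop).const_mul_atTop hddpos
      -- (e) the Stolz–Cesàro quotient identity
      set L' := (-1:ℝ) ^ (i - (k + 1)) *
        ∏ d ∈ Finset.Ico (k + 1) i, (lam + (d:ℝ)) / ((i:ℝ) - (d:ℝ)) with hL'def
      set L : ℝ := L' * (((k:ℝ) + lam) / ((i:ℝ) - (k:ℝ))) with hLdef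
      have hSstep : ∀ n : ℕ, S (n + 1) - S n
          = b (k + 1) (n + 2) / P i (n + 1) * (((k:ℝ) + lam) / ((i:ℝ) - (k:ℝ)))
            * (Q (n + 1) - Q n) := by
        intro n
        have hsum := Finset.sum_Icc_succ_top (by omega : 1 ≤ n + 1)
          (fun m : ℕ => b (k + 1) (m + 1) * (c1 * ((k:ℝ) + lam) / (m:ℝ)) / P k (m - 1))
        have hS1 : S (n + 1) - S n
            = b (k + 1) (n + 2) * (c1 * ((k:ℝ) + lam) / ((n:ℝ) + 1)) / P k n := by
          rw [hSdef]
          simp only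
          rw [hsum]
          simp only [Nat.add_sub_cancel]
          push_cast
          ring
        rw [hS1, hQstep n, hPstep i n]
        have h1 : 1 - δ i / ((n:ℝ) + 1) ≠ 0 := (hfacn n i le_rfl).ne'
        have h3 : P k n ≠ 0 := (hPpos k hkle n).ne'
        have h3' : P i n ≠ 0 := (hPpos i le_rfl n).ne'
        have hu : ((n:ℝ) + 1) ≠ 0 := by positivity
        have h4 : ((n:ℝ) + 1) - δ i ≠ 0 := by
          have h6 : (0:ℝ) ≤ (n:ℝ) := Nat.cast_nonneg n
          nlinarith [hδlt i le_rfl]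
        have h5 : (i:ℝ) - (k:ℝ) ≠ 0 := ne_of_gt hik
        rw [hQdef]
        simp only
        rw [hdd]
        have hδi : 1 - δ i / ((n:ℝ) + 1) = (((n:ℝ) + 1) - δ i) / ((n:ℝ) + 1) := by
          field_simp
        rw [hδi]
        field_simp
      have hd : ∀ n, 0 ≤ Q (n + 1) - Q n := fun n => (hdpos n).le
      have hIH' : Tendsto (fun n : ℕ => b (k + 1) (n + 2) / P i (n + 1)) atTop (nhds L') := by
        have hcomp := IH.comp (tendsto_add_atTop_nat 1)
        apply hcomp.congr
        intro n
        simp only [Function.comp]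
        rw [htop (n + 1)]
      have h0 : Tendsto (fun n : ℕ => b (k + 1) (n + 2) / P i (n + 1)
          * (((k:ℝ) + lam) / ((i:ℝ) - (k:ℝ))) - L) atTop (nhds 0) := by
        have := (hIH'.mul_const (((k:ℝ) + lam) / ((i:ℝ) - (k:ℝ)))).sub_const L
        rw [hLdef] at this ⊢
        simpa using this
      have hfo : (fun n => S (n + 1) - S n - L * (Q (n + 1) - Q n)) =o[atTop]
          fun n => Q (n + 1) - Q n := by
        have hoo := (isLittleO_one_iff ℝ).2 h0
        have hbig := hoo.mul_isBigO (isBigO_refl (fun n : ℕ => Q (n + 1) - Q n) atTop)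
        apply hbig.congr
        · intro n
          rw [hSstep n]
          ring
        · intro n
          rw [one_mul]
      have hSC := my_stolz S Q L hd hQtop hfo
      -- (f) conclusion
      have hfin : Tendsto (fun n : ℕ => (Q n)⁻¹ - S n / Q n) atTop (nhds (0 - L)) :=
        (hQtop.inv_tendsto_atTop).sub hSC
      have heq : ∀ n : ℕ, b k (n + 1) / b i (n + 1) = (Q n)⁻¹ - S n / Q n := by
        intro n
        rw [hbk n, show b i (n + 1) = P i n from htop n]
        have h3 : P i n ≠ 0 := (hPpos i le_rfl n).ne'
        have h4 : P k n ≠ 0 := (hPpos k hkle n).ne'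
        rw [hQdef]
        simp only
        field_simp
      have hT : Tendsto (fun n : ℕ => b k (n + 1) / b i (n + 1)) atTop (nhds (0 - L)) :=
        hfin.congr (fun n => (heq n).symm)
      convert hT using 2
      rw [hLdef, hL'def, Finset.prod_eq_prod_Ico_succ_bot hk,
        show i - k = (i - (k + 1)) + 1 from by omega, pow_succ]
      ring
  intro k hk
  exact key (i - k) k (by omega)
end

section
/- Suppose coefficients $(b_{k,l,n})$ satisfy the four recursions (listed in context) making $M_n(i,j) = \sum_{l=0}^j\sum_{k=0}^i b_{k,l,n}(N_n(k,l)-\nu_n(k,l))$ well-defined, and $(\nu_n(k,l))$ satisfies the mean recursion. Then the telescoping identity holds: $\sum_{l=0}^j\sum_{k=0}^i \big(b_{k,l,n+1}\nu_{n+1}(k,l) - b_{k,l,n}\nu_n(k,l)\big) = \alpha\, b_{0,1,n+1} + \gamma\, b_{1,0,n+1}$. -/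
open Finset

private lemma shiftSum (m : ℕ) (F G : ℕ → ℝ) (hF0 : F 0 = 0)
    (hFG : ∀ k, F (k + 1) = G k) (hGm : G m = 0) :
    ∑ k ∈ Finset.range (m + 1), (F k - G k) = 0 := by
  rw [Finset.sum_sub_distrib, Finset.sum_range_succ' F, Finset.sum_range_succ G,
    hF0, hGm, add_zero, add_zero]
  simp_rw [hFG]
  exact sub_self _

/-- Telescoping identity for the compensator part of the martingale `M_n(i,j)`:
`∑_{l=0}^{j} ∑_{k=0}^{i} (b_{k,l,n+1} ν_{n+1}(k,l) - b_{k,l,n} ν_n(k,l))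
  = α b_{0,1,n+1} + γ b_{1,0,n+1}`. -/
theorem stmt11 (i j : ℕ) (α γ c1 c2 lam mu : ℝ)
    (hc1 : 0 < c1) (hc2 : 0 < c2) (hlam : 0 < lam) (hmu : 0 < mu)
    (δ : ℕ → ℕ → ℝ) (hδ : ∀ k l : ℕ, δ k l = c1 * ((k : ℝ) + lam) + c2 * ((l : ℝ) + mu))
    (b : ℕ → ℕ → ℕ → ℝ) (ν : ℕ → ℕ → ℕ → ℝ)
    (hconvK : ∀ l n : ℕ, b (i + 1) l n = 0) (hconvL : ∀ k n : ℕ, b k (j + 1) n = 0)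
    (hrec1 : ∀ n : ℕ, 1 ≤ n → b i j (n + 1) * (1 - δ i j / n) = b i j n)
    (hrec2 : ∀ n : ℕ, 1 ≤ n → ∀ k < i,
      b k j (n + 1) * (1 - δ k j / n) + b (k + 1) j (n + 1) * (c1 * ((k : ℝ) + lam) / n)
        = b k j n)
    (hrec3 : ∀ n : ℕ, 1 ≤ n → ∀ l < j,
      b i l (n + 1) * (1 - δ i l / n) + b i (l + 1) (n + 1) * (c2 * ((l : ℝ) + mu) / n)
        = b i l n)
    (hrec4 : ∀ n : ℕ, 1 ≤ n → ∀ k < i, ∀ l < j,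
      b k l (n + 1) * (1 - δ k l / n) + b (k + 1) l (n + 1) * (c1 * ((k : ℝ) + lam) / n)
        + b k (l + 1) (n + 1) * (c2 * ((l : ℝ) + mu) / n) = b k l n)
    (hmean : ∀ n : ℕ, 1 ≤ n → ∀ k ≤ i, ∀ l ≤ j,
      ν (n + 1) k l = (if (k, l) = (0, 1) then α else 0) + (if (k, l) = (1, 0) then γ else 0)
        + (1 - δ k l / n) * ν n k l
        + (if 1 ≤ k then c1 * ((k : ℝ) - 1 + lam) / n * ν n (k - 1) l else 0)
        + (if 1 ≤ l then c2 * ((l : ℝ) - 1 + mu) / n * ν n k (l - 1) else 0)) :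
    ∀ n : ℕ, 1 ≤ n →
      ∑ l ∈ Finset.range (j + 1), ∑ k ∈ Finset.range (i + 1),
          (b k l (n + 1) * ν (n + 1) k l - b k l n * ν n k l)
        = α * b 0 1 (n + 1) + γ * b 1 0 (n + 1) := by
  intro n hn
  -- unified recursion, valid for all k ≤ i, l ≤ j thanks to the boundary conditions
  have hrecAll : ∀ k ≤ i, ∀ l ≤ j,
      b k l n = b k l (n + 1) * (1 - δ k l / n)
        + b (k + 1) l (n + 1) * (c1 * ((k : ℝ) + lam) / n)
        + b k (l + 1) (n + 1) * (c2 * ((l : ℝ) + mu) / n) := by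
    intro k hk l hl
    rcases eq_or_lt_of_le hk with rfl | hk
    · rcases eq_or_lt_of_le hl with rfl | hl
      · rw [hconvK, hconvL]
        have h := hrec1 n hn
        simp only [zero_mul, add_zero]
        linarith
      · rw [hconvK]
        have h := hrec3 n hn l hl
        simp only [zero_mul, add_zero]
        linarith
    · rcases eq_or_lt_of_le hl with rfl | hl
      · rw [hconvL]
        have h := hrec2 n hn k hk
        simp only [zero_mul, add_zero]
        linarith
      · have h := hrec4 n hn k hk l hl
        linarith
  have key : ∀ l ∈ Finset.range (j + 1), ∀ k ∈ Finset.range (i + 1),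
      b k l (n + 1) * ν (n + 1) k l - b k l n * ν n k l =
        (b k l (n + 1) * (if (k, l) = (0, 1) then α else 0)
          + b k l (n + 1) * (if (k, l) = (1, 0) then γ else 0))
        + (b k l (n + 1) * (if 1 ≤ k then c1 * ((k : ℝ) - 1 + lam) / n * ν n (k - 1) l else 0)
          - b (k + 1) l (n + 1) * (c1 * ((k : ℝ) + lam) / n) * ν n k l)
        + (b k l (n + 1) * (if 1 ≤ l then c2 * ((l : ℝ) - 1 + mu) / n * ν n k (l - 1) else 0)
          - b k (l + 1) (n + 1) * (c2 * ((l : ℝ) + mu) / n) * ν n k l) := by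
    intro l hl k hk
    rw [hmean n hn k (Nat.lt_succ_iff.mp (Finset.mem_range.mp hk))
        l (Nat.lt_succ_iff.mp (Finset.mem_range.mp hl)),
      hrecAll k (Nat.lt_succ_iff.mp (Finset.mem_range.mp hk))
        l (Nat.lt_succ_iff.mp (Finset.mem_range.mp hl))]
    ring
  rw [Finset.sum_congr rfl fun l hl => Finset.sum_congr rfl fun k hk => key l hl k hk]
  simp only [Finset.sum_add_distrib]
  have hA : ∑ l ∈ Finset.range (j + 1), ∑ k ∈ Finset.range (i + 1),
      b k l (n + 1) * (if (k, l) = (0, 1) then α else 0) = α * b 0 1 (n + 1) := by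
    have e : ∀ l k : ℕ, b k l (n + 1) * (if (k, l) = (0, 1) then α else 0)
        = if k = 0 then (if l = 1 then b k l (n + 1) * α else 0) else 0 := by
      intro l k
      by_cases h1 : k = 0 <;> by_cases h2 : l = 1 <;> simp [h1, h2, Prod.ext_iff]
    simp_rw [e]
    simp only [Finset.sum_ite_eq', Finset.mem_range, Nat.lt_succ_iff, Nat.zero_le, if_true]
    by_cases hj : 1 ≤ j
    · rw [if_pos hj]; ring
    · rw [if_neg hj]
      have h0 : j = 0 := by omega
      subst h0
      simp [hconvL 0 (n + 1)]
  have hB : ∑ l ∈ Finset.range (j + 1), ∑ k ∈ Finset.range (i + 1),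
      b k l (n + 1) * (if (k, l) = (1, 0) then γ else 0) = γ * b 1 0 (n + 1) := by
    have e : ∀ l k : ℕ, b k l (n + 1) * (if (k, l) = (1, 0) then γ else 0)
        = if k = 1 then (if l = 0 then b k l (n + 1) * γ else 0) else 0 := by
      intro l k
      by_cases h1 : k = 1 <;> by_cases h2 : l = 0 <;> simp [h1, h2, Prod.ext_iff]
    simp_rw [e]
    by_cases hi : 1 ≤ i
    · simp only [Finset.sum_ite_eq', Finset.mem_range, Nat.lt_succ_iff, Nat.zero_le,
        hi, if_true]
      ring
    · have h0 : i = 0 := by omega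
      subst h0
      simp [hconvK 0 (n + 1)]
  have hDK : ∑ l ∈ Finset.range (j + 1), ∑ k ∈ Finset.range (i + 1),
      (b k l (n + 1) * (if 1 ≤ k then c1 * ((k : ℝ) - 1 + lam) / n * ν n (k - 1) l else 0)
        - b (k + 1) l (n + 1) * (c1 * ((k : ℝ) + lam) / n) * ν n k l) = 0 := by
    refine Finset.sum_eq_zero fun l _ => ?_
    refine shiftSum i
      (fun k => b k l (n + 1) *
        (if 1 ≤ k then c1 * ((k : ℝ) - 1 + lam) / n * ν n (k - 1) l else 0))
      (fun k => b (k + 1) l (n + 1) * (c1 * ((k : ℝ) + lam) / n) * ν n k l)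
      (by simp) (fun k => ?_) (by simp [hconvK])
    simp only [Nat.add_sub_cancel, if_pos (Nat.succ_le_succ (Nat.zero_le k))]
    push_cast
    ring
  have hDL : ∑ l ∈ Finset.range (j + 1), ∑ k ∈ Finset.range (i + 1),
      (b k l (n + 1) * (if 1 ≤ l then c2 * ((l : ℝ) - 1 + mu) / n * ν n k (l - 1) else 0)
        - b k (l + 1) (n + 1) * (c2 * ((l : ℝ) + mu) / n) * ν n k l) = 0 := by
    rw [Finset.sum_comm]
    refine Finset.sum_eq_zero fun k _ => ?_
    refine shiftSum j
      (fun l => b k l (n + 1) *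
        (if 1 ≤ l then c2 * ((l : ℝ) - 1 + mu) / n * ν n k (l - 1) else 0))
      (fun l => b k (l + 1) (n + 1) * (c2 * ((l : ℝ) + mu) / n) * ν n k l)
      (by simp) (fun l => ?_) (by simp [hconvL])
    simp only [Nat.add_sub_cancel, if_pos (Nat.succ_le_succ (Nat.zero_le l))]
    push_cast
    ring
  rw [hA, hB, hDK, hDL]
  ring
end
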